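/- The support map is a morphism of weak distributive laws: let X be a set and Φ : PMF (Set X) be such that the support of Φ is finite and every A in the support of Φ is a finite set. Then {B : Set X | B ⊆ ⋃₀ (support of Φ) and for every A in the support of Φ, A ∩ B is nonempty} = PMF.support '' {Φ.bind f | f : Set X → PMF X such that for every A in the support of Φ, the support of f A is contained in A}. That is, applying the powerset-over-powerset law δ to the support of Φ gives exactly the set of supports of the distributions in the distribution-over-powerset law applied to Φ. -/

import Mathlib

/-- The support map is a morphism of weak distributive laws: applying the
powerset-over-powerset law to the support of `Φ` gives exactly the set of
supports of the distributions in the distribution-over-powerset law applied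
to `Φ`. -/
theorem supp_morphism_of_wdl {X : Type*} (Φ : PMF (Set X))
    (hΦ : Φ.support.Finite) (hfin : ∀ A ∈ Φ.support, A.Finite) :
    {B : Set X | B ⊆ ⋃₀ Φ.support ∧ ∀ A ∈ Φ.support, (A ∩ B).Nonempty} =
      PMF.support ''
        {μ | ∃ f : Set X → PMF X, (∀ A ∈ Φ.support, (f A).support ⊆ A) ∧
          μ = Φ.bind f} := by
  ext B
  simp only [Set.mem_setOf_eq, Set.mem_image]
  constructor
  · rintro ⟨hB, hne⟩
    obtain ⟨A₀, hA₀⟩ := Φ.support_nonempty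
    obtain ⟨x₀, hx₀⟩ := hne A₀ hA₀
    have key : ∀ A : Set X, ∃ p : PMF X, A ∈ Φ.support → p.support = A ∩ B := by
      intro A
      by_cases h : A ∈ Φ.support
      · have hfA : (A ∩ B).Finite := (hfin A h).inter_of_left B
        obtain ⟨x, hx⟩ := hne A h
        refine ⟨PMF.uniformOfFinset hfA.toFinset ⟨x, by simpa using hx⟩, ?_⟩
        intro _
        exact (PMF.support_uniformOfFinset _).trans (by simp)
      · exact ⟨PMF.pure x₀, fun h' => absurd h' h⟩
    choose f hf using key
    refine ⟨Φ.bind f, ⟨f, fun A hA => by rw [hf A hA]; exact Set.inter_subset_left, rfl⟩, ?_⟩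
    rw [PMF.support_bind]
    ext x
    simp only [Set.mem_iUnion]
    constructor
    · rintro ⟨A, hA, hx⟩
      rw [hf A hA] at hx
      exact hx.2
    · intro hx
      obtain ⟨A, hA, hxA⟩ := hB hx
      exact ⟨A, hA, by rw [hf A hA]; exact ⟨hxA, hx⟩⟩
  · rintro ⟨μ, ⟨f, hf, rfl⟩, rfl⟩
    rw [PMF.support_bind]
    constructor
    · intro x hx
      simp only [Set.mem_iUnion] at hx
      obtain ⟨A, hA, hx⟩ := hx
      exact ⟨A, hA, hf A hA hx⟩
    · intro A hA
      obtain ⟨x, hx⟩ := (f A).support_nonempty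
      exact ⟨x, hf A hA hx, Set.mem_iUnion₂.2 ⟨A, hA, hx⟩⟩
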